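/- Let a ∈ ℍ with ‖a‖ < 1 and let α ∈ ℍ. Define 𝓕_a(q) = (q²‖a‖² − 2·Re(a)·q + 1)⁻¹ · (q²a − q(a² + 1) + a). Then the directional derivative of 𝓕_a at the point a in the direction α, i.e. the derivative at t = 0 of the map t ↦ 𝓕_a(a + t·α) (t real), exists and equals ((1 − a²)(1 − ‖a‖²))⁻¹ · (aαa − α). -/

import Mathlib

/-- The regular Möbius transformation `𝓕_a` in its explicit rational form. -/
noncomputable def regularMobius (a q : Quaternion ℝ) : Quaternion ℝ :=
  (‖a‖ ^ 2 • q ^ 2 - (2 * a.re) • q + 1)⁻¹ * (q ^ 2 * a - q * (a ^ 2 + 1) + a)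

/-- the directional derivative of `𝓕_a` at `a` in the direction `α` exists and
equals `((1 − a²)(1 − ‖a‖²))⁻¹ (aαa − α)`. -/
theorem regularMobius_directional_deriv (a : Quaternion ℝ) (ha : ‖a‖ < 1) (α : Quaternion ℝ) :
    HasDerivAt (fun t : ℝ => regularMobius a (a + t • α))
      (((1 - a ^ 2) * ((1 - ‖a‖ ^ 2 : ℝ) : Quaternion ℝ))⁻¹ * (a * α * a - α)) 0 := by
  have hstar : (star a : Quaternion ℝ) = ((2 * a.re : ℝ) : Quaternion ℝ) - a :=
    eq_sub_of_add_eq a.star_add_self'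
  have hns : ((Quaternion.normSq a : ℝ)) = ‖a‖ ^ 2 := by
    rw [Quaternion.normSq_eq_norm_mul_self, sq]
  have key : a ^ 2 = (2 * a.re) • a - (‖a‖ ^ 2 : ℝ) • (1 : Quaternion ℝ) := by
    have h1 : a * star a = ((Quaternion.normSq a : ℝ) : Quaternion ℝ) := a.self_mul_star
    rw [hstar, mul_sub, Quaternion.mul_coe_eq_smul, hns] at h1
    have hc : ((‖a‖ ^ 2 : ℝ) : Quaternion ℝ) = (‖a‖ ^ 2 : ℝ) • (1 : Quaternion ℝ) := by
      rw [← Quaternion.coe_one, Quaternion.smul_coe, mul_one]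
    rw [hc] at h1
    rw [sq, ← h1]
    abel
  have hu : ‖a‖ ^ 2 • a ^ 2 - (2 * a.re) • a + 1
      = (1 - a ^ 2) * ((1 - ‖a‖ ^ 2 : ℝ) : Quaternion ℝ) := by
    rw [Quaternion.mul_coe_eq_smul, key]
    module
  have h1 : (1 : Quaternion ℝ) - a ^ 2 ≠ 0 := by
    intro h
    rw [sub_eq_zero, eq_comm] at h
    have h2 : ‖a ^ 2‖ = 1 := by rw [h, norm_one]
    rw [norm_pow] at h2
    nlinarith [norm_nonneg a]
  have h2 : ((1 - ‖a‖ ^ 2 : ℝ) : Quaternion ℝ) ≠ 0 := by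
    rw [ne_eq, ← Quaternion.coe_zero, Quaternion.coe_inj]
    nlinarith [norm_nonneg a]
  have hune : ‖a‖ ^ 2 • a ^ 2 - (2 * a.re) • a + 1 ≠ 0 := by
    rw [hu]; exact mul_ne_zero h1 h2
  -- derivatives
  have hq : HasDerivAt (fun t : ℝ => a + t • α) α 0 := by
    simpa using ((hasDerivAt_id (0 : ℝ)).smul_const α).const_add a
  have hq2 : HasDerivAt (fun t : ℝ => (a + t • α) ^ 2) (α * a + a * α) 0 := by
    have := hq.mul hq
    simp only [zero_smul, add_zero] at this
    have e : (fun t : ℝ => (a + t • α) ^ 2) = (fun t => a + t • α) * (fun t => a + t • α) := by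
      funext t; simp [sq]
    rw [e]; exact this
  have hN : HasDerivAt (fun t : ℝ => (a + t • α) ^ 2 * a - (a + t • α) * (a ^ 2 + 1) + a)
      ((α * a + a * α) * a - α * (a ^ 2 + 1)) 0 :=
    ((hq2.mul_const a).sub (hq.mul_const (a ^ 2 + 1))).add_const a
  have hD : HasDerivAt (fun t : ℝ => ‖a‖ ^ 2 • (a + t • α) ^ 2 - (2 * a.re) • (a + t • α) + 1)
      (‖a‖ ^ 2 • (α * a + a * α) - (2 * a.re) • α) 0 :=
    ((hq2.const_smul (‖a‖ ^ 2)).sub (hq.const_smul (2 * a.re))).add_const 1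
  set u : Quaternion ℝ := ‖a‖ ^ 2 • a ^ 2 - (2 * a.re) • a + 1 with hudef
  set D' : Quaternion ℝ := ‖a‖ ^ 2 • (α * a + a * α) - (2 * a.re) • α with hD'def
  have hD0 : (fun t : ℝ => ‖a‖ ^ 2 • (a + t • α) ^ 2 - (2 * a.re) • (a + t • α) + 1) 0 = u := by
    simp [hudef]
  have hune' : (fun t : ℝ => ‖a‖ ^ 2 • (a + t • α) ^ 2 - (2 * a.re) • (a + t • α) + 1) 0 ≠ 0 := by
    rw [hD0]; exact hune
  have hDinv : HasDerivAt
      (fun t : ℝ => (‖a‖ ^ 2 • (a + t • α) ^ 2 - (2 * a.re) • (a + t • α) + 1)⁻¹)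
      (-(u⁻¹ * D' * u⁻¹)) 0 := by
    have hunit := hasFDerivAt_ringInverse (𝕜 := ℝ) (R := Quaternion ℝ) (Units.mk0 _ hune')
    have hcomp := hunit.comp_hasDerivAt 0 hD
    simp only [Ring.inverse_eq_inv', Function.comp_def, ContinuousLinearMap.neg_apply,
      ContinuousLinearMap.mulLeftRight_apply, Units.val_inv_eq_inv_val, Units.val_mk0,
      zero_smul, add_zero] at hcomp
    exact hcomp
  have hmul := hDinv.mul hN
  simp only [zero_smul, add_zero] at hmul
  have hz : a ^ 2 * a - a * (a ^ 2 + 1) + a = 0 := by noncomm_ring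
  have hN' : (‖a‖ ^ 2 • a ^ 2 - (2 * a.re) • a + 1)⁻¹ * ((α * a + a * α) * a - α * (a ^ 2 + 1))
      = ((1 - a ^ 2) * ((1 - ‖a‖ ^ 2 : ℝ) : Quaternion ℝ))⁻¹ * (a * α * a - α) := by
    rw [show ‖a‖ ^ 2 • a ^ 2 - (2 * a.re) • a + 1
        = (1 - a ^ 2) * ((1 - ‖a‖ ^ 2 : ℝ) : Quaternion ℝ) from hu]
    congr 1
    noncomm_ring
  rw [hz, mul_zero, zero_add, hN'] at hmul
  simp only [regularMobius]
  exact hmul
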